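/- Fix ℓ ≥ 1 and m ≥ 1, and let f₀ : ℕ → ℚ be the sequence with f₀(1) = f₀(ℓ+1) = 1 and f₀(j) = 0 for all other j ≥ 1. Then for every n ≥ 0, the m-th invert transform of f₀ satisfies (𝒴^m f₀)(n+1) = Σ_{i ≥ 0, ℓi ≤ n} C(n + 1 − ℓi, i) · m^(n − ℓi). (This number counts the words of length n over the alphabet {0, 1, …, m} in which zeros occur only in maximal runs of length exactly ℓ.) -/

import Mathlib

/-- The invert transform of a sequence `x : ℕ → ℚ` (indexed from 1, `x 0` ignored):
`(𝒴x)(0) = 0` and `(𝒴x)(n) = x n + ∑_{j=1}^{n-1} x j * (𝒴x)(n-j)` for `n ≥ 1`. -/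
def invert (x : ℕ → ℚ) : ℕ → ℚ
  | 0 => 0
  | n + 1 => x (n + 1) + ∑ j ∈ Finset.range n, x (j + 1) * invert x (n - j)
  termination_by n => n
  decreasing_by omega

/-- The partial Bell polynomial `B_{n,k}(z₁, z₂, …)`, evaluated at a sequence of rationals
`z` (indexed from 1, `z 0` ignored): the sum over all finitely supported `α : ℕ → ℕ` with
`α 0 = 0`, `∑ i, α i = k` and `∑ i, i * α i = n` of `(n! / ∏ i, (α i)!) * ∏ i (z i / i!)^(α i)`. -/
def partialBell (n k : ℕ) (z : ℕ → ℚ) : ℚ :=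
  ∑ α ∈ ((Finset.range (n + 1)).finsuppAntidiag k).filter
      (fun α => (∑ i ∈ Finset.range (n + 1), i * α i) = n ∧ α 0 = 0),
    ((n.factorial : ℚ) / ∏ i ∈ Finset.range (n + 1), ((α i).factorial : ℚ)) *
      ∏ i ∈ Finset.range (n + 1), (z i / (i.factorial : ℚ)) ^ α i

open PowerSeries in
private noncomputable def Pser (ℓ : ℕ) : PowerSeries ℚ :=
  PowerSeries.mk fun n => if n = 1 ∨ n = ℓ + 1 then 1 else 0

private def gseq (ℓ k : ℕ) : ℕ → ℚ
  | 0 => 0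
  | n + 1 => ∑ i ∈ Finset.range (n / ℓ + 1),
      ((n + 1 - ℓ * i).choose i : ℚ) * (k : ℚ) ^ (n - ℓ * i)

private lemma gseq_zero (ℓ k : ℕ) : gseq ℓ k 0 = 0 := rfl

private lemma invert_zero (x : ℕ → ℚ) : invert x 0 = 0 := by rw [invert]

private lemma L1 (ℓ k : ℕ) (hℓ : 1 ≤ ℓ) (N : ℕ) :
    ∑ i ∈ Finset.range (N / ℓ + 1), ((N - ℓ * i).choose i : ℚ) * (k : ℚ) ^ (N - ℓ * i)
      = k * gseq ℓ k N + (if N = 0 then 1 else 0) := by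
  cases N with
  | zero => simp [gseq, Nat.zero_div]
  | succ M =>
    rw [if_neg (Nat.succ_ne_zero M), add_zero]
    have hsub : Finset.range (M / ℓ + 1) ⊆ Finset.range ((M + 1) / ℓ + 1) := by
      apply Finset.range_subset_range.2
      have := Nat.div_le_div_right (c := ℓ) (show M ≤ M + 1 by omega)
      omega
    have hzero : ∀ i ∈ Finset.range ((M + 1) / ℓ + 1), i ∉ Finset.range (M / ℓ + 1) →
        ((M + 1 - ℓ * i).choose i : ℚ) * (k : ℚ) ^ (M + 1 - ℓ * i) = 0 := by
      intro i hi hni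
      have h1 : i ≤ (M + 1) / ℓ := Nat.lt_succ_iff.mp (Finset.mem_range.mp hi)
      have h2 : M / ℓ < i := by
        by_contra h
        exact hni (Finset.mem_range.mpr (by omega))
      have h3 : i * ℓ ≤ M + 1 := (Nat.le_div_iff_mul_le (by omega)).mp h1
      have h4 : M < i * ℓ := (Nat.div_lt_iff_lt_mul (by omega)).mp h2
      have hc : ℓ * i = i * ℓ := Nat.mul_comm _ _
      have h5 : ℓ * i = M + 1 := by omega
      have h6 : 1 ≤ i := Nat.lt_of_le_of_lt (Nat.zero_le _) h2
      rw [h5]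
      simp [Nat.choose_eq_zero_of_lt (by omega : (0:ℕ) < i)]
    rw [← Finset.sum_subset hsub hzero, gseq, Finset.mul_sum]
    apply Finset.sum_congr rfl
    intro i hi
    have hiM : ℓ * i ≤ M := by
      have hi' : i ≤ M / ℓ := Nat.lt_succ_iff.mp (Finset.mem_range.mp hi)
      calc ℓ * i = i * ℓ := Nat.mul_comm _ _
        _ ≤ M := (Nat.le_div_iff_mul_le (by omega)).mp hi'
    have h1 : M + 1 - ℓ * i = (M - ℓ * i) + 1 := by omega
    rw [h1, pow_succ]
    ring

private lemma g_rec (ℓ k : ℕ) (hℓ : 1 ≤ ℓ) (n : ℕ) :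
    gseq ℓ k n = (if n = 1 then 1 else 0) + (if n = ℓ + 1 then 1 else 0)
      + k * (if 1 ≤ n then gseq ℓ k (n - 1) else 0)
      + k * (if ℓ + 1 ≤ n then gseq ℓ k (n - ℓ - 1) else 0) := by
  cases n with
  | zero =>
    have : ¬ (0 = ℓ + 1) := by omega
    simp [gseq, this]
  | succ N =>
    rw [gseq]
    have hsplit : ∀ i ∈ Finset.range (N / ℓ + 1),
        ((N + 1 - ℓ * i).choose i : ℚ) * (k : ℚ) ^ (N - ℓ * i)
          = ((N - ℓ * i).choose i : ℚ) * (k : ℚ) ^ (N - ℓ * i)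
            + (match i with
               | 0 => 0
               | j + 1 => ((N - ℓ * (j+1)).choose j : ℚ) * (k : ℚ) ^ (N - ℓ * (j+1))) := by
      intro i hi
      have hiM : ℓ * i ≤ N := by
        have hi' : i ≤ N / ℓ := Nat.lt_succ_iff.mp (Finset.mem_range.mp hi)
        calc ℓ * i = i * ℓ := Nat.mul_comm _ _
          _ ≤ N := (Nat.le_div_iff_mul_le (by omega)).mp hi'
      match i with
      | 0 => simp
      | j + 1 =>
        have h1 : N + 1 - ℓ * (j+1) = (N - ℓ * (j+1)) + 1 := by omega
        rw [h1, Nat.choose_succ_succ]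
        push_cast
        ring
    rw [Finset.sum_congr rfl hsplit, Finset.sum_add_distrib, L1 ℓ k hℓ N]
    have hshift : ∑ i ∈ Finset.range (N / ℓ + 1),
        (match i with
         | 0 => (0:ℚ)
         | j + 1 => ((N - ℓ * (j+1)).choose j : ℚ) * (k : ℚ) ^ (N - ℓ * (j+1)))
        = ∑ j ∈ Finset.range (N / ℓ),
            ((N - ℓ - ℓ * j).choose j : ℚ) * (k : ℚ) ^ (N - ℓ - ℓ * j) := by
      rw [Finset.sum_range_succ']
      simp only [add_zero]
      apply Finset.sum_congr rfl
      intro j _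
      have : N - ℓ * (j + 1) = N - ℓ - ℓ * j := by
        rw [Nat.mul_succ]; omega
      rw [this]
    rw [hshift]
    by_cases hN : ℓ ≤ N
    · have hdiv : N / ℓ = (N - ℓ) / ℓ + 1 := by
        conv_lhs => rw [show N = (N - ℓ) + ℓ by omega]
        rw [Nat.add_div_right _ (by omega)]
      rw [hdiv, L1 ℓ k hℓ (N - ℓ)]
      have e1 : (if N + 1 = 1 then (1:ℚ) else 0) = (if N = 0 then 1 else 0) := by
        split_ifs <;> first | rfl | (exfalso; omega)
      have e2 : (if N + 1 = ℓ + 1 then (1:ℚ) else 0) = (if N - ℓ = 0 then 1 else 0) := by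
        split_ifs <;> first | rfl | (exfalso; omega)
      rw [if_pos (by omega : 1 ≤ N + 1), if_pos (by omega : ℓ + 1 ≤ N + 1), e1, e2]
      have e3 : N + 1 - 1 = N := by omega
      have e4 : N + 1 - ℓ - 1 = N - ℓ := by omega
      rw [e3, e4]
      ring
    · have hdiv : N / ℓ = 0 := Nat.div_eq_of_lt (by omega)
      rw [hdiv]
      have e1 : (if N + 1 = 1 then (1:ℚ) else 0) = (if N = 0 then 1 else 0) := by
        split_ifs <;> first | rfl | (exfalso; omega)
      rw [if_pos (by omega : 1 ≤ N + 1), if_neg (by omega : ¬ (ℓ + 1 ≤ N + 1)),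
        if_neg (by omega : ¬ (N + 1 = ℓ + 1)), e1]
      have e3 : N + 1 - 1 = N := by omega
      rw [e3]
      simp
      ring

open PowerSeries in
private lemma coeff_Pser_mul (ℓ : ℕ) (hℓ : 1 ≤ ℓ) (f : ℕ → ℚ) (n : ℕ) :
    coeff n (Pser ℓ * PowerSeries.mk f)
      = (if 1 ≤ n then f (n - 1) else 0) + (if ℓ + 1 ≤ n then f (n - ℓ - 1) else 0) := by
  rw [coeff_mul, Finset.Nat.sum_antidiagonal_eq_sum_range_succ_mk]
  simp only [Pser, coeff_mk]
  have hterm : ∀ i ∈ Finset.range (n + 1),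
      (if i = 1 ∨ i = ℓ + 1 then (1:ℚ) else 0) * f (n - i)
        = (if i = 1 then f (n - i) else 0) + (if i = ℓ + 1 then f (n - i) else 0) := by
    intro i _
    by_cases h1 : i = 1 <;> by_cases h2 : i = ℓ + 1 <;>
      simp [h1, h2] <;> omega
  rw [Finset.sum_congr rfl hterm, Finset.sum_add_distrib,
    Finset.sum_ite_eq' (Finset.range (n+1)) 1 (fun i => f (n - i)),
    Finset.sum_ite_eq' (Finset.range (n+1)) (ℓ+1) (fun i => f (n - i))]
  simp only [Finset.mem_range]
  congr 1
  · split_ifs <;> first | rfl | (exfalso; omega)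
  · split_ifs with h1 h2 h3 <;> first | rfl | (exfalso; omega) | (congr 1; omega)

open PowerSeries in
private lemma Frec (ℓ k : ℕ) (hℓ : 1 ≤ ℓ) :
    (1 - C (k : ℚ) * Pser ℓ) * PowerSeries.mk (gseq ℓ k) = Pser ℓ := by
  ext n
  rw [sub_mul, one_mul, mul_assoc]
  rw [map_sub, coeff_C_mul, coeff_Pser_mul ℓ hℓ _ n, coeff_mk]
  rw [g_rec ℓ k hℓ n]
  simp only [Pser, coeff_mk]
  have : ¬ (n = 1 ∧ n = ℓ + 1) := by omega
  split_ifs with h1 h2 h3 <;> first | (exfalso; omega) | ring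

open PowerSeries in
private lemma invert_spec (x : ℕ → ℚ) (hx : x 0 = 0) :
    (1 - PowerSeries.mk x) * (1 + PowerSeries.mk (invert x)) = 1 := by
  have key : PowerSeries.mk (invert x)
      = PowerSeries.mk x + PowerSeries.mk x * PowerSeries.mk (invert x) := by
    ext n
    rw [map_add, coeff_mk, coeff_mk, coeff_mul,
      Finset.Nat.sum_antidiagonal_eq_sum_range_succ_mk]
    simp only [coeff_mk]
    cases n with
    | zero => simp [invert_zero, hx]
    | succ N =>
      rw [Finset.sum_range_succ]
      simp only [Nat.sub_self, invert_zero, mul_zero, add_zero]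
      rw [Finset.sum_range_succ', hx, zero_mul, add_zero]
      have : ∀ j ∈ Finset.range N, x (j + 1) * invert x (N + 1 - (j + 1))
          = x (j + 1) * invert x (N - j) := by
        intro j _
        congr 2
        omega
      rw [Finset.sum_congr rfl this]
      conv_lhs => rw [invert]
  have expand : (1 - PowerSeries.mk x) * (1 + PowerSeries.mk (invert x))
      = 1 + (PowerSeries.mk (invert x)
          - (PowerSeries.mk x + PowerSeries.mk x * PowerSeries.mk (invert x))) := by
    ring
  rw [expand, ← key]
  ring

open PowerSeries in
private lemma one_sub_ne (f : PowerSeries ℚ) (hf : constantCoeff f = 0) : 1 - f ≠ 0 := by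
  intro h
  have := congrArg (constantCoeff) h
  rw [map_sub, map_one, hf] at this
  norm_num at this

open PowerSeries in
private lemma constCoeff_Pser (ℓ : ℕ) (hℓ : 1 ≤ ℓ) : constantCoeff (Pser ℓ) = 0 := by
  have : constantCoeff (Pser ℓ) = (if 0 = 1 ∨ 0 = ℓ + 1 then (1:ℚ) else 0) := by
    simp [Pser]
  rw [this, if_neg (by omega)]

open PowerSeries in
private lemma main_eq (ℓ k : ℕ) (hℓ : 1 ≤ ℓ) :
    (1 - PowerSeries.mk (gseq ℓ k)) * (1 + PowerSeries.mk (gseq ℓ (k + 1))) = 1 := by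
  set P := Pser ℓ with hP
  have hk := Frec ℓ k hℓ
  have hk1 := Frec ℓ (k + 1) hℓ
  have hq : C ((k + 1 : ℕ) : ℚ) * P = C (k : ℚ) * P + P := by
    push_cast
    rw [map_add, map_one]
    ring
  have hU : (1 - C (k : ℚ) * P) * (1 - C ((k + 1 : ℕ) : ℚ) * P) ≠ 0 := by
    intro h
    have := congrArg (constantCoeff) h
    rw [map_mul, map_sub, map_sub, map_one, map_mul, map_mul, constantCoeff_C,
      constCoeff_Pser ℓ hℓ] at this
    norm_num at this
  apply mul_right_cancel₀ hU
  rw [one_mul]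
  have e1 : (1 - PowerSeries.mk (gseq ℓ k)) * (1 - C (k : ℚ) * P)
      = 1 - C ((k + 1 : ℕ) : ℚ) * P := by
    linear_combination -hk + hq
  have e2 : (1 + PowerSeries.mk (gseq ℓ (k + 1))) * (1 - C ((k + 1 : ℕ) : ℚ) * P)
      = 1 - C (k : ℚ) * P := by
    linear_combination hk1 - hq
  calc (1 - PowerSeries.mk (gseq ℓ k)) * (1 + PowerSeries.mk (gseq ℓ (k + 1)))
        * ((1 - C (k : ℚ) * P) * (1 - C ((k + 1 : ℕ) : ℚ) * P))
      = ((1 - PowerSeries.mk (gseq ℓ k)) * (1 - C (k : ℚ) * P))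
        * ((1 + PowerSeries.mk (gseq ℓ (k + 1))) * (1 - C ((k + 1 : ℕ) : ℚ) * P)) := by ring
    _ = (1 - C ((k + 1 : ℕ) : ℚ) * P) * (1 - C (k : ℚ) * P) := by rw [e1, e2]
    _ = (1 - C (k : ℚ) * P) * (1 - C ((k + 1 : ℕ) : ℚ) * P) := by ring

open PowerSeries in
private lemma invert_gseq (ℓ k : ℕ) (hℓ : 1 ≤ ℓ) :
    invert (gseq ℓ k) = gseq ℓ (k + 1) := by
  have h1 := invert_spec (gseq ℓ k) (gseq_zero ℓ k)
  have h2 := main_eq ℓ k hℓ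
  have hne : (1 - PowerSeries.mk (gseq ℓ k)) ≠ 0 :=
    one_sub_ne _ (by rw [constantCoeff_mk, gseq_zero])
  have h3 := mul_left_cancel₀ hne (h1.trans h2.symm)
  have h4 : PowerSeries.mk (invert (gseq ℓ k)) = PowerSeries.mk (gseq ℓ (k + 1)) :=
    add_left_cancel h3
  funext n
  have := congrArg (coeff n) h4
  simpa using this

private lemma invert_congr (x y : ℕ → ℚ) (h : ∀ j, 1 ≤ j → x j = y j) :
    ∀ n, invert x n = invert y n := by
  intro n
  induction n using Nat.strong_induction_on with
  | _ n ih =>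
    cases n with
    | zero => rw [invert_zero, invert_zero]
    | succ N =>
      conv_lhs => rw [invert]
      conv_rhs => rw [invert]
      rw [h (N + 1) (by omega)]
      congr 1
      apply Finset.sum_congr rfl
      intro j hj
      rw [h (j + 1) (by omega), ih (N - j) (by omega)]

/-- For `f₀ 1 = f₀ (ℓ+1) = 1` and `f₀ j = 0` otherwise, and `m ≥ 1`:
`(𝒴^m f₀)(n+1) = ∑_{ℓi ≤ n} C(n+1-ℓi, i) m^(n-ℓi)`,
which counts words of length `n` over `{0,…,m}` whose zeros occur only in runs of
length exactly `ℓ`. -/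
theorem stmt_10 (ℓ m : ℕ) (hℓ : 1 ≤ ℓ) (hm : 1 ≤ m) (f₀ : ℕ → ℚ)
    (hf : ∀ j, 1 ≤ j → f₀ j = if j = 1 ∨ j = ℓ + 1 then 1 else 0) (n : ℕ) :
    (invert^[m] f₀) (n + 1)
      = ∑ i ∈ Finset.range (n / ℓ + 1),
          ((n + 1 - ℓ * i).choose i : ℚ) * (m : ℚ) ^ (n - ℓ * i) := by
  have hg0 : ∀ j, 1 ≤ j → f₀ j = gseq ℓ 0 j := by
    intro j hj
    rw [hf j hj, g_rec ℓ 0 hℓ j]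
    push_cast
    rw [zero_mul, zero_mul, add_zero, add_zero]
    by_cases h1 : j = 1
    · have h2 : ¬ j = ℓ + 1 := by omega
      simp [h1, h2]
      omega
    · by_cases h2 : j = ℓ + 1 <;> simp [h1, h2] <;> omega
  have hiter : ∀ M, 1 ≤ M → invert^[M] f₀ = gseq ℓ M := by
    intro M hM
    induction M with
    | zero => omega
    | succ M ih =>
      rcases Nat.eq_zero_or_pos M with h | h
      · subst h
        rw [Function.iterate_one]
        funext u
        rw [invert_congr f₀ (gseq ℓ 0) hg0 u, invert_gseq ℓ 0 hℓ]
      · rw [Function.iterate_succ_apply', ih h, invert_gseq ℓ M hℓ]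
  rw [hiter m hm, gseq]
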